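/- Let α_n : [t₁, t₂] → [0, ∞) be continuous and I_n : [t₁, t₂] → ℝ be C¹, and suppose L : [t₁, t₂] → ℝ is C¹ and satisfies L'(t) + α_n(t) L(t) = −I_n'(t) on [t₁, t₂]. Then for all t ∈ [t₁, t₂]: |L(t)| ≤ |L(t₁)| + |I_n(t₁)| + |I_n(t)| + ∫_{t₁}^{t} e^{−∫_s^t α_n(τ)dτ} α_n(s) |I_n(s)| ds. In particular, if |I_n(s)| ≤ K for all s ∈ [t₁, t₂], then |L(t)| ≤ |L(t₁)| + 4K. -/
import Mathlib


open MeasureTheory intervalIntegral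

/-- Hoff's ODE estimate: if `L' + αₙ L = −Iₙ'` on `[t₁, t₂]` with `αₙ ≥ 0`, then
`|L(t)| ≤ |L(t₁)| + |Iₙ(t₁)| + |Iₙ(t)| + ∫ₜ₁ᵗ e^{−∫ₛᵗ αₙ} αₙ(s)|Iₙ(s)| ds`; in
particular `|L(t)| ≤ |L(t₁)| + 4K` whenever `|Iₙ| ≤ K`. -/
theorem hoff_ode_estimate
    (t₁ t₂ : ℝ) (h12 : t₁ ≤ t₂)
    (αn In In' L L' : ℝ → ℝ)
    (hα : ContinuousOn αn (Set.Icc t₁ t₂))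
    (hαnn : ∀ t ∈ Set.Icc t₁ t₂, 0 ≤ αn t)
    (hIn : ∀ t ∈ Set.Icc t₁ t₂, HasDerivAt In (In' t) t)
    (hIn' : ContinuousOn In' (Set.Icc t₁ t₂))
    (hL : ∀ t ∈ Set.Icc t₁ t₂, HasDerivAt L (L' t) t)
    (hL' : ContinuousOn L' (Set.Icc t₁ t₂))
    (hODE : ∀ t ∈ Set.Icc t₁ t₂, L' t + αn t * L t = -In' t) :
    (∀ t ∈ Set.Icc t₁ t₂,
      |L t| ≤ |L t₁| + |In t₁| + |In t| +
        ∫ s in t₁..t, Real.exp (-∫ τ in s..t, αn τ) * αn s * |In s|) ∧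
    (∀ K : ℝ, (∀ s ∈ Set.Icc t₁ t₂, |In s| ≤ K) →
      ∀ t ∈ Set.Icc t₁ t₂, |L t| ≤ |L t₁| + 4 * K) := by
  -- continuous extensions of `αn` and `In` to all of `ℝ`
  set β : ℝ → ℝ := fun t => αn (Set.projIcc t₁ t₂ h12 t) with hβdef
  set g : ℝ → ℝ := fun t => In (Set.projIcc t₁ t₂ h12 t) with hgdef
  have hInc : ContinuousOn In (Set.Icc t₁ t₂) := fun x hx =>
    ((hIn x hx).continuousAt).continuousWithinAt
  have hβc : Continuous β := hα.restrict.comp continuous_projIcc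
  have hgc : Continuous g := hInc.restrict.comp continuous_projIcc
  have hβeq : ∀ t ∈ Set.Icc t₁ t₂, β t = αn t := by
    intro t ht; rw [hβdef]; simp [Set.projIcc_of_mem h12 ht]
  have hgeq : ∀ t ∈ Set.Icc t₁ t₂, g t = In t := by
    intro t ht; rw [hgdef]; simp [Set.projIcc_of_mem h12 ht]
  have hβnn : ∀ t, 0 ≤ β t := fun t => hαnn _ (Set.projIcc t₁ t₂ h12 t).2
  -- the antiderivative of β
  set A : ℝ → ℝ := fun t => ∫ τ in t₁..t, β τ with hAdef
  have hAd : ∀ t, HasDerivAt A (β t) t := fun t =>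
    intervalIntegral.integral_hasDerivAt_right (hβc.intervalIntegrable _ _)
      (hβc.stronglyMeasurableAtFilter _ _) hβc.continuousAt
  have hAc : Continuous A := by
    have : Differentiable ℝ A := fun t => (hAd t).differentiableAt
    exact this.continuous
  set E : ℝ → ℝ := fun t => Real.exp (A t) with hEdef
  have hEd : ∀ t, HasDerivAt E (E t * β t) t := fun t => (hAd t).exp
  have hEc : Continuous E := Real.continuous_exp.comp hAc
  have hEnn : ∀ t, 0 ≤ E t := fun t => (Real.exp_pos _).le
  -- the integral term
  set J : ℝ → ℝ := fun t => ∫ s in t₁..t, E s * β s * g s with hJdef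
  have hjc : Continuous fun s => E s * β s * g s := (hEc.mul hβc).mul hgc
  have hJd : ∀ t, HasDerivAt J (E t * β t * g t) t := fun t =>
    intervalIntegral.integral_hasDerivAt_right (hjc.intervalIntegrable _ _)
      (hjc.stronglyMeasurableAtFilter _ _) hjc.continuousAt
  -- the conserved quantity
  set F : ℝ → ℝ := fun t => E t * L t + E t * In t - J t with hFdef
  have hF0 : ∀ t ∈ Set.Icc t₁ t₂, HasDerivAt F 0 t := by
    intro t ht
    have h := (((hEd t).mul (hL t ht)).add ((hEd t).mul (hIn t ht))).sub (hJd t)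
    have hz : E t * β t * L t + E t * L' t + (E t * β t * In t + E t * In' t) -
        E t * β t * g t = 0 := by
      rw [hβeq t ht, hgeq t ht]
      linear_combination E t * hODE t ht
    rw [hz] at h
    exact h
  have hFconst : ∀ t ∈ Set.Icc t₁ t₂, F t = F t₁ :=
    constant_of_has_deriv_right_zero
      (fun x hx => (hF0 x hx).continuousAt.continuousWithinAt)
      (fun x hx => (hF0 x (Set.Ico_subset_Icc_self hx)).hasDerivWithinAt)
  have hAt₁ : A t₁ = 0 := intervalIntegral.integral_same
  have hEt₁ : E t₁ = 1 := by rw [hEdef]; simp [hAt₁]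
  have hFt₁ : F t₁ = L t₁ + In t₁ := by
    rw [hFdef]; simp [hEt₁, hJdef]
  -- representation formula
  have hrep : ∀ t ∈ Set.Icc t₁ t₂,
      L t = Real.exp (-(A t)) * (L t₁ + In t₁ + J t) - In t := by
    intro t ht
    have h1 : E t * L t + E t * In t - J t = L t₁ + In t₁ := by
      rw [← hFt₁]; exact hFconst t ht
    have hEne : E t ≠ 0 := (Real.exp_pos _).ne'
    have h2 : E t * (L t + In t) = L t₁ + In t₁ + J t := by linarith [h1]
    have h3 : Real.exp (-(A t)) * E t = 1 := by
      rw [hEdef, ← Real.exp_add]; simp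
    calc L t = Real.exp (-(A t)) * (E t * (L t + In t)) - In t := by
          rw [← mul_assoc, h3]; ring
      _ = Real.exp (-(A t)) * (L t₁ + In t₁ + J t) - In t := by rw [h2]
  -- rewriting the target integral
  have hIeq : ∀ t ∈ Set.Icc t₁ t₂,
      (∫ s in t₁..t, Real.exp (-∫ τ in s..t, αn τ) * αn s * |In s|)
        = ∫ s in t₁..t, Real.exp (-(A t)) * (E s * β s * |g s|) := by
    intro t ht
    apply intervalIntegral.integral_congr
    intro s hs
    beta_reduce
    rw [Set.uIcc_of_le ht.1] at hs
    have hsIcc : s ∈ Set.Icc t₁ t₂ := ⟨hs.1, hs.2.trans ht.2⟩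
    have h1 : A t - A s = ∫ τ in s..t, β τ := by
      rw [hAdef]
      exact intervalIntegral.integral_interval_sub_left (hβc.intervalIntegrable t₁ t)
        (hβc.intervalIntegrable t₁ s)
    have hAB : (∫ τ in s..t, αn τ) = A t - A s := by
      rw [h1]
      apply intervalIntegral.integral_congr
      intro τ hτ
      beta_reduce
      rw [Set.uIcc_of_le hs.2] at hτ
      exact (hβeq τ ⟨hs.1.trans hτ.1, hτ.2.trans ht.2⟩).symm
    rw [hAB, ← hβeq s hsIcc, ← hgeq s hsIcc,
      show -(A t - A s) = A s + -(A t) by ring, Real.exp_add, hEdef]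
    ring
  have hmain : ∀ t ∈ Set.Icc t₁ t₂,
      |L t| ≤ |L t₁| + |In t₁| + |In t| +
        ∫ s in t₁..t, Real.exp (-∫ τ in s..t, αn τ) * αn s * |In s| := by
    intro t ht
    have ht1 : t₁ ≤ t := ht.1
    have hAnn : 0 ≤ A t :=
      intervalIntegral.integral_nonneg ht1 (fun s _ => hβnn s)
    have hexple : Real.exp (-(A t)) ≤ 1 := by
      rw [Real.exp_le_one_iff]; linarith
    have hexnn : (0:ℝ) ≤ Real.exp (-(A t)) := (Real.exp_pos _).le
    -- bound on the J-term
    have hJb : Real.exp (-(A t)) * |J t| ≤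
        ∫ s in t₁..t, Real.exp (-(A t)) * (E s * β s * |g s|) := by
      have h1 : |J t| ≤ ∫ s in t₁..t, |E s * β s * g s| :=
        intervalIntegral.abs_integral_le_integral_abs ht1
      have h2 : (∫ s in t₁..t, |E s * β s * g s|)
          = ∫ s in t₁..t, E s * β s * |g s| := by
        apply intervalIntegral.integral_congr
        intro s _
        beta_reduce
        rw [abs_mul, abs_mul, abs_of_nonneg (hEnn s), abs_of_nonneg (hβnn s)]
      rw [h2] at h1
      calc Real.exp (-(A t)) * |J t|
          ≤ Real.exp (-(A t)) * ∫ s in t₁..t, E s * β s * |g s| :=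
            mul_le_mul_of_nonneg_left h1 hexnn
        _ = ∫ s in t₁..t, Real.exp (-(A t)) * (E s * β s * |g s|) :=
            (intervalIntegral.integral_const_mul _ _).symm
    have habs : |L t| ≤ Real.exp (-(A t)) * (|L t₁| + |In t₁| + |J t|) + |In t| := by
      rw [hrep t ht]
      calc |Real.exp (-(A t)) * (L t₁ + In t₁ + J t) - In t|
          ≤ |Real.exp (-(A t)) * (L t₁ + In t₁ + J t)| + |In t| := abs_sub _ _
        _ ≤ Real.exp (-(A t)) * (|L t₁| + |In t₁| + |J t|) + |In t| := by
            rw [abs_mul, abs_of_nonneg hexnn]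
            gcongr
            calc |L t₁ + In t₁ + J t| ≤ |L t₁ + In t₁| + |J t| := abs_add_le _ _
              _ ≤ |L t₁| + |In t₁| + |J t| := by gcongr; exact abs_add_le _ _
    have e1 : Real.exp (-(A t)) * |L t₁| ≤ |L t₁| :=
      mul_le_of_le_one_left (abs_nonneg _) hexple
    have e2 : Real.exp (-(A t)) * |In t₁| ≤ |In t₁| :=
      mul_le_of_le_one_left (abs_nonneg _) hexple
    have hexpand : Real.exp (-(A t)) * (|L t₁| + |In t₁| + |J t|)
        = Real.exp (-(A t)) * |L t₁| + Real.exp (-(A t)) * |In t₁|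
          + Real.exp (-(A t)) * |J t| := by ring
    rw [hIeq t ht]
    linarith [habs, e1, e2, hJb, hexpand]
  refine ⟨hmain, ?_⟩
  intro K hK t ht
  have ht1 : t₁ ≤ t := ht.1
  have hK0 : 0 ≤ K := (abs_nonneg _).trans (hK t₁ ⟨le_refl _, h12⟩)
  have hAnn : 0 ≤ A t := intervalIntegral.integral_nonneg ht1 (fun s _ => hβnn s)
  have hexnn : (0:ℝ) ≤ Real.exp (-(A t)) := (Real.exp_pos _).le
  -- FTC: ∫ E β = E t - 1
  have hFTC : (∫ s in t₁..t, E s * β s) = E t - 1 := by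
    have := intervalIntegral.integral_eq_sub_of_hasDerivAt
      (f := E) (f' := fun s => E s * β s) (a := t₁) (b := t)
      (fun s _ => hEd s) ((hEc.mul hβc).intervalIntegrable _ _)
    rw [this, hEt₁]
  have hintb : (∫ s in t₁..t, Real.exp (-(A t)) * (E s * β s * |g s|)) ≤ K := by
    have hmono : (∫ s in t₁..t, Real.exp (-(A t)) * (E s * β s * |g s|))
        ≤ ∫ s in t₁..t, (Real.exp (-(A t)) * K) * (E s * β s) := by
      apply intervalIntegral.integral_mono_on ht1
      · exact ((continuous_const.mul ((hEc.mul hβc).mul hgc.abs)).intervalIntegrable _ _)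
      · exact ((continuous_const.mul (hEc.mul hβc)).intervalIntegrable _ _)
      · intro s hs
        have hsIcc : s ∈ Set.Icc t₁ t₂ := ⟨hs.1, hs.2.trans ht.2⟩
        have hgK : |g s| ≤ K := by rw [hgeq s hsIcc]; exact hK s hsIcc
        have : E s * β s * |g s| ≤ E s * β s * K :=
          mul_le_mul_of_nonneg_left hgK (mul_nonneg (hEnn s) (hβnn s))
        calc Real.exp (-(A t)) * (E s * β s * |g s|)
            ≤ Real.exp (-(A t)) * (E s * β s * K) := by
              exact mul_le_mul_of_nonneg_left this hexnn
          _ = (Real.exp (-(A t)) * K) * (E s * β s) := by ring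
    have hRHS : (∫ s in t₁..t, (Real.exp (-(A t)) * K) * (E s * β s))
        = (Real.exp (-(A t)) * K) * (E t - 1) := by
      rw [intervalIntegral.integral_const_mul, hFTC]
    have h3 : Real.exp (-(A t)) * E t = 1 := by
      rw [hEdef, ← Real.exp_add]; simp
    have heK : 0 ≤ Real.exp (-(A t)) * K := mul_nonneg hexnn hK0
    have hprod : (Real.exp (-(A t)) * K) * (E t - 1) = K - Real.exp (-(A t)) * K := by
      linear_combination K * h3
    linarith [hmono, hRHS, heK, hprod]
  have h1 := hmain t ht
  rw [hIeq t ht] at h1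
  have h2 : |In t₁| ≤ K := hK t₁ ⟨le_refl _, h12⟩
  have h3 : |In t| ≤ K := hK t ht
  linarith
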